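/- Let S ≥ 1 and define μ_L = 1/(2S-1) and μ_FL = min{ 1/(2(1-q_2)S - 1), 1/((2-q_1)S) }, where q_1, q_2 ∈ [0,1] are the fractions of large and small coefficients among the S nonzero coefficients (so q_1 S and q_2 S are nonnegative integers with q_1 S + q_2 S ≤ S, q_1 S ≥ 1, q_2 S ≥ 1). If q_1 S > 1 then μ_FL > μ_L. -/

import Mathlib

/-- With `μ_L = 1/(2S-1)` and `μ_FL = min{1/(2(1-q₂)S - 1), 1/((2-q₁)S)}`,
where `q₁ = k₁/S` and `q₂ = k₂/S` are the fractions of large and small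
coefficients (`k₁, k₂ ≥ 1`, `k₁ + k₂ ≤ S`), if `q₁ S > 1` then `μ_FL > μ_L`. -/
theorem muFL_gt_muL (S k₁ k₂ : ℕ) (hS : 1 ≤ S)
    (q₁ q₂ : ℝ) (hq₁ : q₁ = (k₁ : ℝ) / S) (hq₂ : q₂ = (k₂ : ℝ) / S)
    (hk₁ : 1 ≤ k₁) (hk₂ : 1 ≤ k₂) (hsum : k₁ + k₂ ≤ S)
    (hbig : q₁ * S > 1) :
    min (1 / (2 * (1 - q₂) * S - 1)) (1 / ((2 - q₁) * S))
      > 1 / (2 * S - 1) := by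
  have hSpos : (0:ℝ) < S := by exact_mod_cast Nat.lt_of_lt_of_le Nat.zero_lt_one hS
  have hSne : (S:ℝ) ≠ 0 := ne_of_gt hSpos
  have hq₁S : q₁ * S = (k₁ : ℝ) := by rw [hq₁]; field_simp
  have hk₁r : (1:ℝ) < k₁ := by rw [hq₁S] at hbig; exact hbig
  have hk₁2 : (2:ℝ) ≤ k₁ := by
    have : 2 ≤ k₁ := by exact_mod_cast Nat.lt_iff_add_one_le.mp (by exact_mod_cast hk₁r)
    exact_mod_cast this
  have hk₂r : (1:ℝ) ≤ k₂ := by exact_mod_cast hk₂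
  have hsumr : (k₁:ℝ) + k₂ ≤ S := by exact_mod_cast hsum
  have e1 : 2 * (1 - q₂) * S - 1 = 2 * (S:ℝ) - 2 * k₂ - 1 := by
    rw [hq₂]; field_simp
  have e2 : (2 - q₁) * S = 2 * (S:ℝ) - k₁ := by
    rw [hq₁]; field_simp
  rw [e1, e2]
  apply lt_min
  · apply one_div_lt_one_div_of_lt
    · linarith
    · linarith
  · apply one_div_lt_one_div_of_lt
    · linarith
    · linarith
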